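/- arXiv:2209.03565 — 4 statements merged into one kernel-verified Lean document; each statement's English description precedes it below -/
import Mathlib

section
/- Let E be a real symmetric positive definite n×n matrix and α > 0. Let c₁, c₂, c₃ ∈ ℝⁿ be nonzero, linearly independent vectors with c₃ orthogonal to both c₁ and c₂. Define Q = (1/2)(c₁c₂ᵀ + c₂c₁ᵀ) + c₃c₃ᵀ, φ(x) = xᵀQx, and γ = λmax(E^{-1/2}(2Q − c₃c₃ᵀ)E^{-1/2}). Then for every x ∈ ℝⁿ with xᵀEx ≤ α², one has φ(x)² ≤ α² (c₁ᵀE⁻¹c₁)(c₂ᵀx)² + α² γ (c₃ᵀx)², and likewise φ(x)² ≤ α² (c₂ᵀE⁻¹c₂)(c₁ᵀx)² + α² γ (c₃ᵀx)² (the Rank-3 Valley quadratic constraints). -/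
open Matrix

private lemma dot_symm' {m : Type*} [Fintype m] {A : Matrix m m ℝ} (hA : Aᵀ = A)
    (u v : m → ℝ) : u ⬝ᵥ A *ᵥ v = (A *ᵥ u) ⬝ᵥ v := by
  rw [dotProduct_mulVec, ← mulVec_transpose, hA]

private lemma vecMulVec_dot' {m : Type*} [Fintype m] (u v x : m → ℝ) :
    x ⬝ᵥ (vecMulVec u v) *ᵥ x = (u ⬝ᵥ x) * (v ⬝ᵥ x) := by
  simp only [dotProduct, mulVec, vecMulVec_apply, Finset.mul_sum, Finset.sum_mul]
  rw [Finset.sum_comm]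
  congr 1; ext i; congr 1; ext j; ring

private lemma posdef_dot_nonneg {m : Type*} [Fintype m] {E : Matrix m m ℝ}
    (hE : E.PosSemidef) (v : m → ℝ) : 0 ≤ v ⬝ᵥ E *ᵥ v := by
  have := hE.dotProduct_mulVec_nonneg v
  simpa using this

private lemma cs_posdef' {m : Type*} [Fintype m] {E : Matrix m m ℝ} (hE : E.PosDef)
    (u v : m → ℝ) : (u ⬝ᵥ E *ᵥ v) ^ 2 ≤ (u ⬝ᵥ E *ᵥ u) * (v ⬝ᵥ E *ᵥ v) := by
  have hsymm : Eᵀ = E := by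
    have := hE.isHermitian
    rwa [IsHermitian, conjTranspose_eq_transpose_of_trivial] at this
  have hvu : v ⬝ᵥ E *ᵥ u = u ⬝ᵥ E *ᵥ v := by
    rw [dot_symm' hsymm v u, dotProduct_comm]
  have key : ∀ t : ℝ, 0 ≤ (v ⬝ᵥ E *ᵥ v) * (t * t) + (2 * (u ⬝ᵥ E *ᵥ v)) * t
      + (u ⬝ᵥ E *ᵥ u) := by
    intro t
    have h0 : 0 ≤ (u + t • v) ⬝ᵥ E *ᵥ (u + t • v) := posdef_dot_nonneg hE.posSemidef _
    have hexp : (u + t • v) ⬝ᵥ E *ᵥ (u + t • v)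
        = (v ⬝ᵥ E *ᵥ v) * (t * t) + (2 * (u ⬝ᵥ E *ᵥ v)) * t + (u ⬝ᵥ E *ᵥ u) := by
      simp only [mulVec_add, mulVec_smul, add_dotProduct, dotProduct_add, smul_dotProduct,
        dotProduct_smul, smul_eq_mul]
      rw [hvu]; ring
    linarith [hexp ▸ h0]
  have hd := discrim_le_zero key
  rw [discrim] at hd
  nlinarith [hd]

private lemma rayleigh_le' {m : Type*} [Fintype m] [DecidableEq m] [Nonempty m]
    {A : Matrix m m ℝ} (hA : A.IsHermitian) (x : m → ℝ) :
    x ⬝ᵥ A *ᵥ x ≤ (⨆ i, hA.eigenvalues i) * (x ⬝ᵥ x) := by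
  set U : Matrix m m ℝ := (hA.eigenvectorUnitary : Matrix m m ℝ) with hU
  set y : m → ℝ := Uᵀ *ᵥ x with hy
  have hstar : star U = Uᵀ := by
    rw [star_eq_conjTranspose, conjTranspose_eq_transpose_of_trivial]
  have hUU : U * Uᵀ = 1 := by
    have := (Matrix.mem_unitaryGroup_iff).mp hA.eigenvectorUnitary.2
    rwa [hstar] at this
  have h1 : x ⬝ᵥ A *ᵥ x = y ⬝ᵥ (diagonal hA.eigenvalues) *ᵥ y := by
    conv_lhs => rw [hA.spectral_theorem]
    have hdiag : (diagonal (RCLike.ofReal ∘ hA.eigenvalues) : Matrix m m ℝ)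
        = diagonal hA.eigenvalues := by
      congr 1
    rw [hdiag, Unitary.conjStarAlgAut_apply, hstar, ← mulVec_mulVec, ← mulVec_mulVec, dotProduct_mulVec,
      ← mulVec_transpose, hy, dotProduct_mulVec, ← mulVec_transpose]
  have h2 : x ⬝ᵥ x = y ⬝ᵥ y := by
    rw [hy, dotProduct_mulVec, ← mulVec_transpose, transpose_transpose,
      mulVec_mulVec, hUU, one_mulVec]
  have h3 : y ⬝ᵥ (diagonal hA.eigenvalues) *ᵥ y = ∑ i, hA.eigenvalues i * (y i * y i) := by
    simp only [dotProduct, mulVec_diagonal]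
    congr 1; ext i; ring
  have hbdd : BddAbove (Set.range hA.eigenvalues) := Set.Finite.bddAbove (Set.finite_range _)
  have h4 : ∑ i, hA.eigenvalues i * (y i * y i)
      ≤ ∑ i, (⨆ j, hA.eigenvalues j) * (y i * y i) := by
    apply Finset.sum_le_sum
    intro i _
    exact mul_le_mul_of_nonneg_right (le_ciSup hbdd i) (mul_self_nonneg _)
  rw [h1, h3, h2]
  calc ∑ i, hA.eigenvalues i * (y i * y i)
      ≤ ∑ i, (⨆ j, hA.eigenvalues j) * (y i * y i) := h4
    _ = (⨆ j, hA.eigenvalues j) * (y ⬝ᵥ y) := by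
        rw [← Finset.mul_sum]; rfl

/-- Rank-3 Valley quadratic constraints (Theorem 3): let `c₁, c₂, c₃` be
nonzero, linearly independent vectors with `c₃` orthogonal to `c₁` and `c₂`,
let `Q = (1/2)(c₁c₂ᵀ + c₂c₁ᵀ) + c₃c₃ᵀ`, `φ(x) = xᵀQx`, and
`γ = λmax(E^{-1/2}(2Q − c₃c₃ᵀ)E^{-1/2})`.  Then every `x` in the ellipsoid
`{x : xᵀEx ≤ α²}` satisfies `φ(x)² ≤ α²(c₁ᵀE⁻¹c₁)(c₂ᵀx)² + α²γ(c₃ᵀx)²`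
and `φ(x)² ≤ α²(c₂ᵀE⁻¹c₂)(c₁ᵀx)² + α²γ(c₃ᵀx)²`. -/
theorem rank3_valley_QC {n : ℕ} (E : Matrix (Fin n) (Fin n) ℝ) (hE : E.PosDef)
    (α : ℝ) (hα : 0 < α) (c₁ c₂ c₃ : Fin n → ℝ)
    (h1 : c₁ ≠ 0) (h2 : c₂ ≠ 0) (h3 : c₃ ≠ 0)
    (hli : LinearIndependent ℝ ![c₁, c₂, c₃])
    (ho1 : c₃ ⬝ᵥ c₁ = 0) (ho2 : c₃ ⬝ᵥ c₂ = 0)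
    (Q : Matrix (Fin n) (Fin n) ℝ)
    (hQdef : Q = (1 / 2 : ℝ) • (vecMulVec c₁ c₂ + vecMulVec c₂ c₁) + vecMulVec c₃ c₃)
    (hM : (((hE.posSemidef.1.eigenvectorUnitary : Matrix (Fin n) (Fin n) ℝ) *
        diagonal (fun i => Real.sqrt (hE.posSemidef.1.eigenvalues i)) *
        (star hE.posSemidef.1.eigenvectorUnitary : Matrix (Fin n) (Fin n) ℝ))⁻¹ * ((2 : ℝ) • Q - vecMulVec c₃ c₃) *
        ((hE.posSemidef.1.eigenvectorUnitary : Matrix (Fin n) (Fin n) ℝ) *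
        diagonal (fun i => Real.sqrt (hE.posSemidef.1.eigenvalues i)) *
        (star hE.posSemidef.1.eigenvectorUnitary : Matrix (Fin n) (Fin n) ℝ))⁻¹).IsHermitian)
    (γ : ℝ) (hγ : γ = ⨆ i, hM.eigenvalues i)
    (x : Fin n → ℝ) (hx : x ⬝ᵥ E.mulVec x ≤ α ^ 2) :
    (x ⬝ᵥ Q.mulVec x) ^ 2
        ≤ α ^ 2 * (c₁ ⬝ᵥ E⁻¹.mulVec c₁) * (c₂ ⬝ᵥ x) ^ 2 + α ^ 2 * γ * (c₃ ⬝ᵥ x) ^ 2 ∧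
    (x ⬝ᵥ Q.mulVec x) ^ 2
        ≤ α ^ 2 * (c₂ ⬝ᵥ E⁻¹.mulVec c₂) * (c₁ ⬝ᵥ x) ^ 2 + α ^ 2 * γ * (c₃ ⬝ᵥ x) ^ 2 := by
  -- nontrivial dimension
  rcases Nat.eq_zero_or_pos n with hn | hn
  · subst hn
    exact absurd (funext fun i => i.elim0) h3
  have : Nonempty (Fin n) := ⟨⟨0, hn⟩⟩
  -- basic symmetric matrices
  have hEsymm : Eᵀ = E := by
    have := hE.isHermitian
    rwa [IsHermitian, conjTranspose_eq_transpose_of_trivial] at this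
  set S : Matrix (Fin n) (Fin n) ℝ := (hE.posSemidef.1.eigenvectorUnitary : Matrix (Fin n) (Fin n) ℝ) *
        diagonal (fun i => Real.sqrt (hE.posSemidef.1.eigenvalues i)) *
        (star hE.posSemidef.1.eigenvectorUnitary : Matrix (Fin n) (Fin n) ℝ) with hS
  have hSsymm : Sᵀ = S := by
    simp only [hS, transpose_mul, diagonal_transpose, Unitary.coe_star, star_eq_conjTranspose,
      conjTranspose_eq_transpose_of_trivial, transpose_transpose, Matrix.mul_assoc]
  have hSsq : S * S = E := by
    have hUU : (star (hE.posSemidef.1.eigenvectorUnitary : Matrix (Fin n) (Fin n) ℝ)) *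
        (hE.posSemidef.1.eigenvectorUnitary : Matrix (Fin n) (Fin n) ℝ) = 1 :=
      Unitary.coe_star_mul_self _
    conv_rhs => rw [hE.posSemidef.1.spectral_theorem, Unitary.conjStarAlgAut_apply]
    rw [hS]
    simp only [Matrix.mul_assoc]
    rw [← Matrix.mul_assoc (star _) _ _, hUU, Matrix.one_mul, ← Matrix.mul_assoc (diagonal _) _ _,
      diagonal_mul_diagonal]
    congr 3
    funext i
    simp [Real.mul_self_sqrt (hE.posSemidef.eigenvalues_nonneg i)]
  have hSdet : IsUnit S.det := by
    have hdetE : 0 < E.det := hE.det_pos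
    rw [← hSsq, det_mul] at hdetE
    exact isUnit_iff_ne_zero.mpr (fun h => by simp [h] at hdetE)
  have hEdet : IsUnit E.det := isUnit_iff_ne_zero.mpr (ne_of_gt hE.det_pos)
  have hSS : S * S⁻¹ = 1 := mul_nonsing_inv S hSdet
  have hSS' : S⁻¹ * S = 1 := nonsing_inv_mul S hSdet
  -- quadratic form evaluations
  have hφ : ∀ z : Fin n → ℝ, z ⬝ᵥ Q *ᵥ z = (c₁ ⬝ᵥ z) * (c₂ ⬝ᵥ z) + (c₃ ⬝ᵥ z) ^ 2 := by
    intro z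
    rw [hQdef]
    simp only [add_mulVec, smul_mulVec, dotProduct_add, dotProduct_smul, smul_eq_mul]
    rw [vecMulVec_dot', vecMulVec_dot', vecMulVec_dot']
    ring
  set N : Matrix (Fin n) (Fin n) ℝ := (2 : ℝ) • Q - vecMulVec c₃ c₃ with hNdef
  have hNform : ∀ z : Fin n → ℝ,
      z ⬝ᵥ N *ᵥ z = 2 * ((c₁ ⬝ᵥ z) * (c₂ ⬝ᵥ z)) + (c₃ ⬝ᵥ z) ^ 2 := by
    intro z
    rw [hNdef]
    simp only [sub_mulVec, smul_mulVec, dotProduct_sub, dotProduct_smul, smul_eq_mul]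
    rw [hφ z, vecMulVec_dot']
    ring
  -- Rayleigh bound
  have hRay : ∀ z : Fin n → ℝ, z ⬝ᵥ N *ᵥ z ≤ γ * (z ⬝ᵥ E *ᵥ z) := by
    intro z
    have h := rayleigh_le' hM (S *ᵥ z)
    have e1 : (S *ᵥ z) ⬝ᵥ (S⁻¹ * N * S⁻¹) *ᵥ (S *ᵥ z) = z ⬝ᵥ N *ᵥ z := by
      rw [mulVec_mulVec, ← dot_symm' hSsymm, mulVec_mulVec]
      have : S * (S⁻¹ * N * S⁻¹) * S = N := by
        simp only [← Matrix.mul_assoc]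
        rw [hSS, Matrix.one_mul, Matrix.mul_assoc, hSS', Matrix.mul_one]
      rw [← Matrix.mul_assoc, this]
    have e2 : (S *ᵥ z) ⬝ᵥ (S *ᵥ z) = z ⬝ᵥ E *ᵥ z := by
      rw [← dot_symm' hSsymm, mulVec_mulVec, hSsq]
    rw [e1, e2, ← hγ] at h
    exact h
  -- positivity of γ
  have hc33 : (0:ℝ) < c₃ ⬝ᵥ c₃ := by
    have hne : c₃ ⬝ᵥ c₃ ≠ 0 := fun h => h3 (dotProduct_self_eq_zero.mp h)
    have hnn : (0:ℝ) ≤ c₃ ⬝ᵥ c₃ := by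
      simp only [dotProduct]
      exact Finset.sum_nonneg fun i _ => mul_self_nonneg _
    exact lt_of_le_of_ne hnn (Ne.symm hne)
  have hE3 : (0:ℝ) < c₃ ⬝ᵥ E *ᵥ c₃ := by
    have := hE.dotProduct_mulVec_pos h3
    simpa using this
  have hγ0 : 0 ≤ γ := by
    have h := hRay c₃
    rw [hNform c₃] at h
    have hc1 : c₁ ⬝ᵥ c₃ = 0 := by rw [dotProduct_comm]; exact ho1
    have hc2 : c₂ ⬝ᵥ c₃ = 0 := by rw [dotProduct_comm]; exact ho2
    rw [hc1] at h
    nlinarith [h, hc33, hE3]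
  -- Cauchy-Schwarz bounds
  have hEx0 : 0 ≤ x ⬝ᵥ E *ᵥ x := posdef_dot_nonneg hE.posSemidef x
  have hcs : ∀ c : Fin n → ℝ,
      (c ⬝ᵥ x) ^ 2 ≤ (c ⬝ᵥ E⁻¹ *ᵥ c) * α ^ 2 := by
    intro c
    set u : Fin n → ℝ := E⁻¹ *ᵥ c with hu
    have hEu : E *ᵥ u = c := by
      rw [hu, mulVec_mulVec, mul_nonsing_inv E hEdet, one_mulVec]
    have hux : u ⬝ᵥ E *ᵥ x = c ⬝ᵥ x := by
      rw [dot_symm' hEsymm, hEu]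
    have huu : u ⬝ᵥ E *ᵥ u = c ⬝ᵥ E⁻¹ *ᵥ c := by
      rw [hEu, dotProduct_comm]
    have h := cs_posdef' hE u x
    rw [hux, huu] at h
    have hk : 0 ≤ c ⬝ᵥ E⁻¹ *ᵥ c := by
      rw [← huu]; exact posdef_dot_nonneg hE.posSemidef u
    calc (c ⬝ᵥ x) ^ 2 ≤ (c ⬝ᵥ E⁻¹ *ᵥ c) * (x ⬝ᵥ E *ᵥ x) := h
      _ ≤ (c ⬝ᵥ E⁻¹ *ᵥ c) * α ^ 2 := mul_le_mul_of_nonneg_left hx hk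
  -- final assembly
  set a1 := c₁ ⬝ᵥ x
  set a2 := c₂ ⬝ᵥ x
  set a3 := c₃ ⬝ᵥ x
  have hφx : x ⬝ᵥ Q *ᵥ x = a1 * a2 + a3 ^ 2 := hφ x
  have f3 : 2 * (a1 * a2) + a3 ^ 2 ≤ γ * α ^ 2 := by
    have h := hRay x
    rw [hNform x] at h
    calc 2 * (a1 * a2) + a3 ^ 2 ≤ γ * (x ⬝ᵥ E *ᵥ x) := h
      _ ≤ γ * α ^ 2 := mul_le_mul_of_nonneg_left hx hγ0
  have key : (a1 * a2 + a3 ^ 2) ^ 2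
      = a1 ^ 2 * a2 ^ 2 + a3 ^ 2 * (2 * (a1 * a2) + a3 ^ 2) := by ring
  constructor
  · have f1 := hcs c₁
    have g1 : a1 ^ 2 * a2 ^ 2 ≤ ((c₁ ⬝ᵥ E⁻¹ *ᵥ c₁) * α ^ 2) * a2 ^ 2 :=
      mul_le_mul_of_nonneg_right f1 (sq_nonneg a2)
    have g2 : a3 ^ 2 * (2 * (a1 * a2) + a3 ^ 2) ≤ a3 ^ 2 * (γ * α ^ 2) :=
      mul_le_mul_of_nonneg_left f3 (sq_nonneg a3)
    rw [hφx, key]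
    nlinarith [g1, g2]
  · have f2 := hcs c₂
    have g1 : a2 ^ 2 * a1 ^ 2 ≤ ((c₂ ⬝ᵥ E⁻¹ *ᵥ c₂) * α ^ 2) * a1 ^ 2 :=
      mul_le_mul_of_nonneg_right f2 (sq_nonneg a1)
    have g2 : a3 ^ 2 * (2 * (a1 * a2) + a3 ^ 2) ≤ a3 ^ 2 * (γ * α ^ 2) :=
      mul_le_mul_of_nonneg_left f3 (sq_nonneg a3)
    rw [hφx, key]
    nlinarith [g1, g2]
end

section
/- Let Q be a real symmetric n×n matrix of rank 3 having exactly two positive eigenvalues and exactly one negative eigenvalue (counting multiplicity). Then there exist nonzero, linearly independent vectors c₁, c₂, c₃ ∈ ℝⁿ with c₃ orthogonal to both c₁ and c₂ such that Q = (1/2)(c₁c₂ᵀ + c₂c₁ᵀ) + c₃c₃ᵀ. Explicitly, if (λ₁, v₁), (λ₂, v₂), (λ₃, v₃) are orthonormal eigenpairs of Q with λ₁, λ₂ > 0 and λ₃ < 0, then c₁ = √λ₁ v₁ + √|λ₃| v₃, c₂ = √λ₁ v₁ − √|λ₃| v₃, and c₃ = √λ₂ v₂ satisfy this decomposition. -/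
open Matrix

/-- Appendix B (forward direction): a real symmetric matrix `Q` of rank 3 with
exactly two positive and one negative eigenvalue (counting multiplicity) can
be written as `Q = (1/2)(c₁c₂ᵀ + c₂c₁ᵀ) + c₃c₃ᵀ` for nonzero, linearly
independent `c₁, c₂, c₃` with `c₃` orthogonal to `c₁` and `c₂`.  Explicitly,
if `(μ₁, v₁), (μ₂, v₂), (μ₃, v₃)` are orthonormal eigenpairs with
`μ₁, μ₂ > 0 > μ₃`, then `c₁ = √μ₁ v₁ + √|μ₃| v₃`, `c₂ = √μ₁ v₁ − √|μ₃| v₃`,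
and `c₃ = √μ₂ v₂` work. -/
theorem rank3_indefinite_decomposition {n : ℕ} (Q : Matrix (Fin n) (Fin n) ℝ)
    (hQ : Q.IsHermitian) (hrank : Q.rank = 3)
    (hpos : (Finset.univ.filter fun i => 0 < hQ.eigenvalues i).card = 2)
    (hneg : (Finset.univ.filter fun i => hQ.eigenvalues i < 0).card = 1)
    (μ₁ μ₂ μ₃ : ℝ) (v₁ v₂ v₃ : Fin n → ℝ)
    (hμ₁ : 0 < μ₁) (hμ₂ : 0 < μ₂) (hμ₃ : μ₃ < 0)
    (hv₁ : Q.mulVec v₁ = μ₁ • v₁) (hv₂ : Q.mulVec v₂ = μ₂ • v₂)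
    (hv₃ : Q.mulVec v₃ = μ₃ • v₃)
    (h11 : v₁ ⬝ᵥ v₁ = 1) (h22 : v₂ ⬝ᵥ v₂ = 1) (h33 : v₃ ⬝ᵥ v₃ = 1)
    (h12 : v₁ ⬝ᵥ v₂ = 0) (h13 : v₁ ⬝ᵥ v₃ = 0) (h23 : v₂ ⬝ᵥ v₃ = 0) :
    (∃ c₁ c₂ c₃ : Fin n → ℝ, c₁ ≠ 0 ∧ c₂ ≠ 0 ∧ c₃ ≠ 0 ∧
        LinearIndependent ℝ ![c₁, c₂, c₃] ∧
        c₃ ⬝ᵥ c₁ = 0 ∧ c₃ ⬝ᵥ c₂ = 0 ∧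
        Q = (1 / 2 : ℝ) • (vecMulVec c₁ c₂ + vecMulVec c₂ c₁) + vecMulVec c₃ c₃) ∧
    (let c₁ := Real.sqrt μ₁ • v₁ + Real.sqrt |μ₃| • v₃
     let c₂ := Real.sqrt μ₁ • v₁ - Real.sqrt |μ₃| • v₃
     let c₃ := Real.sqrt μ₂ • v₂
     c₁ ≠ 0 ∧ c₂ ≠ 0 ∧ c₃ ≠ 0 ∧ LinearIndependent ℝ ![c₁, c₂, c₃] ∧
      c₃ ⬝ᵥ c₁ = 0 ∧ c₃ ⬝ᵥ c₂ = 0 ∧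
      Q = (1 / 2 : ℝ) • (vecMulVec c₁ c₂ + vecMulVec c₂ c₁) + vecMulVec c₃ c₃) := by
  have h21 : v₂ ⬝ᵥ v₁ = 0 := by rw [dotProduct_comm]; exact h12
  have h31 : v₃ ⬝ᵥ v₁ = 0 := by rw [dotProduct_comm]; exact h13
  have h32 : v₃ ⬝ᵥ v₂ = 0 := by rw [dotProduct_comm]; exact h23
  -- symmetry of Q
  have hsym : Qᵀ = Q := hQ
  have hdsym : ∀ u w : Fin n → ℝ, u ⬝ᵥ Q.mulVec w = (Q.mulVec u) ⬝ᵥ w := by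
    intro u w
    rw [Matrix.dotProduct_mulVec]
    conv_lhs => rw [← hsym]
    rw [Matrix.vecMul_transpose]
  -- the eigenvectors are linearly independent
  set V : Fin 3 → (Fin n → ℝ) := ![v₁, v₂, v₃] with hV
  have hvli : LinearIndependent ℝ V := by
    rw [Fintype.linearIndependent_iff]
    intro g hg
    have hsum : g 0 • v₁ + g 1 • v₂ + g 2 • v₃ = 0 := by
      simpa [hV, Fin.sum_univ_three] using hg
    have e1 : v₁ ⬝ᵥ (g 0 • v₁ + g 1 • v₂ + g 2 • v₃) = g 0 := by
      simp [dotProduct_add, h11, h12, h13, mul_comm]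
    have e2 : v₂ ⬝ᵥ (g 0 • v₁ + g 1 • v₂ + g 2 • v₃) = g 1 := by
      simp [dotProduct_add, h21, h22, h23, mul_comm]
    have e3 : v₃ ⬝ᵥ (g 0 • v₁ + g 1 • v₂ + g 2 • v₃) = g 2 := by
      simp [dotProduct_add, h31, h32, h33, mul_comm]
    rw [hsum] at e1 e2 e3
    simp only [dotProduct_zero] at e1 e2 e3
    intro i
    fin_cases i
    · exact e1.symm
    · exact e2.symm
    · exact e3.symm
  -- each eigenvector lies in the range of Q
  have hmem : ∀ i, V i ∈ LinearMap.range Q.mulVecLin := by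
    intro i
    have : ∀ (μ : ℝ) (v : Fin n → ℝ), μ ≠ 0 → Q.mulVec v = μ • v →
        v ∈ LinearMap.range Q.mulVecLin := by
      intro μ v hμ hv
      refine ⟨μ⁻¹ • v, ?_⟩
      simp [Matrix.mulVecLin_apply, Matrix.mulVec_smul, hv, smul_smul,
        inv_mul_cancel₀ hμ]
    fin_cases i
    · exact this μ₁ v₁ (ne_of_gt hμ₁) hv₁
    · exact this μ₂ v₂ (ne_of_gt hμ₂) hv₂
    · exact this μ₃ v₃ (ne_of_lt hμ₃) hv₃
  have hle : Submodule.span ℝ (Set.range V) ≤ LinearMap.range Q.mulVecLin := by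
    rw [Submodule.span_le]
    rintro x ⟨i, rfl⟩
    exact hmem i
  have hspan_eq : Submodule.span ℝ (Set.range V) = LinearMap.range Q.mulVecLin := by
    apply Submodule.eq_of_le_of_finrank_le hle
    have h1 : Module.finrank ℝ (LinearMap.range Q.mulVecLin) = 3 := hrank
    have h2 : Module.finrank ℝ (Submodule.span ℝ (Set.range V)) = 3 := by
      rw [finrank_span_eq_card hvli]; simp
    rw [h1, h2]
  -- key formula for the action of Q
  have key : ∀ w : Fin n → ℝ, Q.mulVec w =
      (μ₁ * (v₁ ⬝ᵥ w)) • v₁ + (μ₂ * (v₂ ⬝ᵥ w)) • v₂ + (μ₃ * (v₃ ⬝ᵥ w)) • v₃ := by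
    intro w
    have hw : Q.mulVec w ∈ Submodule.span ℝ (Set.range V) := by
      rw [hspan_eq]; exact ⟨w, rfl⟩
    obtain ⟨g, hg⟩ := (Submodule.mem_span_range_iff_exists_fun ℝ).1 hw
    have hg' : g 0 • v₁ + g 1 • v₂ + g 2 • v₃ = Q.mulVec w := by
      simpa [hV, Fin.sum_univ_three] using hg
    have d1 : v₁ ⬝ᵥ Q.mulVec w = μ₁ * (v₁ ⬝ᵥ w) := by
      rw [hdsym, hv₁, smul_dotProduct]; rfl
    have d2 : v₂ ⬝ᵥ Q.mulVec w = μ₂ * (v₂ ⬝ᵥ w) := by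
      rw [hdsym, hv₂, smul_dotProduct]; rfl
    have d3 : v₃ ⬝ᵥ Q.mulVec w = μ₃ * (v₃ ⬝ᵥ w) := by
      rw [hdsym, hv₃, smul_dotProduct]; rfl
    have e1 : v₁ ⬝ᵥ (g 0 • v₁ + g 1 • v₂ + g 2 • v₃) = g 0 := by
      simp [dotProduct_add, h11, h12, h13, mul_comm]
    have e2 : v₂ ⬝ᵥ (g 0 • v₁ + g 1 • v₂ + g 2 • v₃) = g 1 := by
      simp [dotProduct_add, h21, h22, h23, mul_comm]
    have e3 : v₃ ⬝ᵥ (g 0 • v₁ + g 1 • v₂ + g 2 • v₃) = g 2 := by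
      simp [dotProduct_add, h31, h32, h33, mul_comm]
    rw [hg'] at e1 e2 e3
    rw [← hg', e1.symm.trans d1, e2.symm.trans d2, e3.symm.trans d3]
  -- entrywise formula for Q
  have hQij : ∀ i j, Q i j =
      μ₁ * (v₁ i * v₁ j) + μ₂ * (v₂ i * v₂ j) + μ₃ * (v₃ i * v₃ j) := by
    intro i j
    have := congrFun (key (Pi.single j 1)) i
    simpa [Matrix.mulVec_single, dotProduct_single, mul_comm,
      mul_left_comm, mul_assoc] using this
  -- abbreviations for the square roots
  set s := Real.sqrt μ₁ with hs
  set t := Real.sqrt |μ₃| with ht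
  set u := Real.sqrt μ₂ with hu
  have hs2 : s * s = μ₁ := Real.mul_self_sqrt hμ₁.le
  have ht2 : t * t = -μ₃ := by
    rw [ht, Real.mul_self_sqrt (abs_nonneg _), abs_of_neg hμ₃]
  have hu2 : u * u = μ₂ := Real.mul_self_sqrt hμ₂.le
  have hspos : 0 < s := Real.sqrt_pos.2 hμ₁
  have htpos : 0 < t := Real.sqrt_pos.2 (abs_pos.2 (ne_of_lt hμ₃))
  have hupos : 0 < u := Real.sqrt_pos.2 hμ₂
  set c₁ : Fin n → ℝ := s • v₁ + t • v₃ with hc₁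
  set c₂ : Fin n → ℝ := s • v₁ - t • v₃ with hc₂
  set c₃ : Fin n → ℝ := u • v₂ with hc₃
  -- dot products with the eigenvectors
  have dc : ∀ w : Fin n → ℝ,
      v₁ ⬝ᵥ w = 0 → v₂ ⬝ᵥ w = 0 → v₃ ⬝ᵥ w = 0 →
      c₁ ⬝ᵥ w = 0 ∧ c₂ ⬝ᵥ w = 0 ∧ c₃ ⬝ᵥ w = 0 := by
    intro w w1 w2 w3
    refine ⟨?_, ?_, ?_⟩ <;>
      simp [hc₁, hc₂, hc₃, add_dotProduct, sub_dotProduct,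
        smul_dotProduct, w1, w2, w3]
  -- nonvanishing
  have hc₁v₁ : v₁ ⬝ᵥ c₁ = s := by
    simp [hc₁, dotProduct_add, h11, h13]
  have hc₂v₁ : v₁ ⬝ᵥ c₂ = s := by
    simp [hc₂, dotProduct_sub, h11, h13]
  have hc₁v₃ : v₃ ⬝ᵥ c₁ = t := by
    simp [hc₁, dotProduct_add, h31, h33]
  have hc₂v₃ : v₃ ⬝ᵥ c₂ = -t := by
    simp [hc₂, dotProduct_sub, h31, h33]
  have hc₃v₂ : v₂ ⬝ᵥ c₃ = u := by
    simp [hc₃, h22]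
  have hc₁v₂ : v₂ ⬝ᵥ c₁ = 0 := by
    simp [hc₁, dotProduct_add, h21, h23]
  have hc₂v₂ : v₂ ⬝ᵥ c₂ = 0 := by
    simp [hc₂, dotProduct_sub, h21, h23]
  have hc₃v₁ : v₁ ⬝ᵥ c₃ = 0 := by simp [hc₃, h12]
  have hc₃v₃ : v₃ ⬝ᵥ c₃ = 0 := by simp [hc₃, h32]
  have hc₁ne : c₁ ≠ 0 := by
    intro h
    have := hc₁v₁
    rw [h, dotProduct_zero] at this
    exact absurd this.symm (ne_of_gt hspos)
  have hc₂ne : c₂ ≠ 0 := by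
    intro h
    have := hc₂v₁
    rw [h, dotProduct_zero] at this
    exact absurd this.symm (ne_of_gt hspos)
  have hc₃ne : c₃ ≠ 0 := by
    intro h
    have := hc₃v₂
    rw [h, dotProduct_zero] at this
    exact absurd this.symm (ne_of_gt hupos)
  -- linear independence of c₁, c₂, c₃
  have hcli : LinearIndependent ℝ ![c₁, c₂, c₃] := by
    rw [Fintype.linearIndependent_iff]
    intro g hg
    have hsum : g 0 • c₁ + g 1 • c₂ + g 2 • c₃ = 0 := by
      simpa [Fin.sum_univ_three] using hg
    have e1 : v₁ ⬝ᵥ (g 0 • c₁ + g 1 • c₂ + g 2 • c₃) = (g 0 + g 1) * s := by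
      simp [dotProduct_add, dotProduct_smul, hc₁v₁, hc₂v₁, hc₃v₁]
      try ring
    have e2 : v₂ ⬝ᵥ (g 0 • c₁ + g 1 • c₂ + g 2 • c₃) = g 2 * u := by
      simp [dotProduct_add, dotProduct_smul, hc₁v₂, hc₂v₂, hc₃v₂]
      try ring
    have e3 : v₃ ⬝ᵥ (g 0 • c₁ + g 1 • c₂ + g 2 • c₃) = (g 0 - g 1) * t := by
      simp [dotProduct_add, dotProduct_smul, hc₁v₃, hc₂v₃, hc₃v₃]
      try ring
    rw [hsum] at e1 e2 e3
    simp only [dotProduct_zero] at e1 e2 e3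
    have hab : g 0 + g 1 = 0 := by
      rcases mul_eq_zero.1 e1.symm with h | h
      · exact h
      · exact absurd h (ne_of_gt hspos)
    have hab' : g 0 - g 1 = 0 := by
      rcases mul_eq_zero.1 e3.symm with h | h
      · exact h
      · exact absurd h (ne_of_gt htpos)
    have hd : g 2 = 0 := by
      rcases mul_eq_zero.1 e2.symm with h | h
      · exact h
      · exact absurd h (ne_of_gt hupos)
    have hg0 : g 0 = 0 := by linarith
    have hg1 : g 1 = 0 := by linarith
    intro i
    fin_cases i
    · exact hg0
    · exact hg1
    · exact hd
  -- orthogonality of c₃ with c₁ and c₂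
  have ho1 : c₃ ⬝ᵥ c₁ = 0 := by
    simp [hc₃, smul_dotProduct, hc₁v₂]
  have ho2 : c₃ ⬝ᵥ c₂ = 0 := by
    simp [hc₃, smul_dotProduct, hc₂v₂]
  -- the decomposition
  have hdecomp : Q = (1 / 2 : ℝ) • (vecMulVec c₁ c₂ + vecMulVec c₂ c₁) + vecMulVec c₃ c₃ := by
    ext i j
    simp only [Matrix.add_apply, Matrix.smul_apply, Matrix.vecMulVec_apply,
      hc₁, hc₂, hc₃, Pi.add_apply, Pi.sub_apply, Pi.smul_apply, smul_eq_mul]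
    rw [hQij i j, ← hs2, ← hu2, show μ₃ = -(t * t) by linarith]
    ring
  refine ⟨⟨c₁, c₂, c₃, hc₁ne, hc₂ne, hc₃ne, hcli, ho1, ho2, hdecomp⟩,
    hc₁ne, hc₂ne, hc₃ne, hcli, ho1, ho2, hdecomp⟩
end

section
/- Let c₁, c₂, c₃ ∈ ℝⁿ be nonzero, linearly independent vectors with c₃ orthogonal to both c₁ and c₂, and define Q = (1/2)(c₁c₂ᵀ + c₂c₁ᵀ) + c₃c₃ᵀ. Then Q is a real symmetric matrix of rank 3 with exactly two positive eigenvalues and exactly one negative eigenvalue (counting multiplicity); in particular, ‖c₃‖² is a positive eigenvalue of Q with eigenvector c₃. -/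
open Matrix

private lemma aux_vmv {n : ℕ} (a b x : Fin n → ℝ) : vecMulVec a b *ᵥ x = (b ⬝ᵥ x) • a := by
  ext i
  simp [vecMulVec_apply, mulVec, dotProduct, Finset.mul_sum, mul_comm, mul_left_comm]

private lemma aux_spectral {n : ℕ} (A : Matrix (Fin n) (Fin n) ℝ) (hA : A.IsHermitian)
    (x : Fin n → ℝ) :
    x ⬝ᵥ A *ᵥ x = ∑ i, hA.eigenvalues i *
      ((star (hA.eigenvectorUnitary : Matrix (Fin n) (Fin n) ℝ) *ᵥ x) i) ^ 2 := by
  conv_lhs => rw [hA.spectral_theorem, Unitary.conjStarAlgAut_apply]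
  rw [← Matrix.mulVec_mulVec, ← Matrix.mulVec_mulVec, Matrix.dotProduct_mulVec]
  have hsU : vecMul x (hA.eigenvectorUnitary : Matrix (Fin n) (Fin n) ℝ)
      = star (hA.eigenvectorUnitary : Matrix (Fin n) (Fin n) ℝ) *ᵥ x := by
    ext i
    simp [vecMul, mulVec, dotProduct, Matrix.star_eq_conjTranspose,
      Matrix.conjTranspose_apply, mul_comm]
  rw [hsU]
  simp [dotProduct, mulVec_diagonal, mul_comm, mul_left_comm, sq, mul_assoc]

private lemma aux_dp_pos {n : ℕ} {v : Fin n → ℝ} (hv : v ≠ 0) : 0 < v ⬝ᵥ v := by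
  have h1 : v ⬝ᵥ v ≠ 0 := fun h => hv (dotProduct_self_eq_zero.mp h)
  have h2 : 0 ≤ v ⬝ᵥ v := Finset.sum_nonneg fun i _ => mul_self_nonneg _
  exact lt_of_le_of_ne h2 (Ne.symm h1)

/-- Appendix B (converse direction): for nonzero, linearly independent
`c₁, c₂, c₃` with `c₃` orthogonal to `c₁` and `c₂`, the matrix
`Q = (1/2)(c₁c₂ᵀ + c₂c₁ᵀ) + c₃c₃ᵀ` is symmetric of rank 3 with exactly two
positive and one negative eigenvalue (counting multiplicity); in particular
`‖c₃‖² = c₃ᵀc₃` is a positive eigenvalue of `Q` with eigenvector `c₃`. -/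
theorem rank3_indefinite_of_decomposition {n : ℕ} (c₁ c₂ c₃ : Fin n → ℝ)
    (h1 : c₁ ≠ 0) (h2 : c₂ ≠ 0) (h3 : c₃ ≠ 0)
    (hli : LinearIndependent ℝ ![c₁, c₂, c₃])
    (ho1 : c₃ ⬝ᵥ c₁ = 0) (ho2 : c₃ ⬝ᵥ c₂ = 0)
    (Q : Matrix (Fin n) (Fin n) ℝ)
    (hQdef : Q = (1 / 2 : ℝ) • (vecMulVec c₁ c₂ + vecMulVec c₂ c₁) + vecMulVec c₃ c₃) :
    ∃ hQ : Q.IsHermitian,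
      Q.rank = 3 ∧
      (Finset.univ.filter fun i => 0 < hQ.eigenvalues i).card = 2 ∧
      (Finset.univ.filter fun i => hQ.eigenvalues i < 0).card = 1 ∧
      0 < c₃ ⬝ᵥ c₃ ∧ Q.mulVec c₃ = (c₃ ⬝ᵥ c₃) • c₃ := by
  classical
  -- symmetry
  have hQsym : Q.IsHermitian := by
    show Qᴴ = Q
    subst hQdef
    ext i j
    simp [Matrix.conjTranspose_apply, vecMulVec_apply]
    ring
  refine ⟨hQsym, ?_⟩
  -- basic dot products
  set A := c₁ ⬝ᵥ c₁ with hAdef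
  set B := c₁ ⬝ᵥ c₂ with hBdef
  set C := c₂ ⬝ᵥ c₂ with hCdef
  set E := c₃ ⬝ᵥ c₃ with hEdef
  have hA : 0 < A := aux_dp_pos h1
  have hC : 0 < C := aux_dp_pos h2
  have hE : 0 < E := aux_dp_pos h3
  have hB' : c₂ ⬝ᵥ c₁ = B := dotProduct_comm c₂ c₁
  have ho1' : c₁ ⬝ᵥ c₃ = 0 := by rw [dotProduct_comm]; exact ho1
  have ho2' : c₂ ⬝ᵥ c₃ = 0 := by rw [dotProduct_comm]; exact ho2
  -- mulVec formula
  have hmv : ∀ x : Fin n → ℝ, Q *ᵥ x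
      = ((1/2) * (c₂ ⬝ᵥ x)) • c₁ + ((1/2) * (c₁ ⬝ᵥ x)) • c₂ + (c₃ ⬝ᵥ x) • c₃ := by
    intro x
    rw [hQdef]
    rw [Matrix.add_mulVec, Matrix.smul_mulVec, Matrix.add_mulVec, aux_vmv, aux_vmv, aux_vmv]
    rw [smul_add, smul_smul, smul_smul]
  -- quadratic form formula
  have hq : ∀ x : Fin n → ℝ, x ⬝ᵥ Q *ᵥ x = (c₁ ⬝ᵥ x) * (c₂ ⬝ᵥ x) + (c₃ ⬝ᵥ x) ^ 2 := by
    intro x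
    rw [hmv x]
    rw [dotProduct_add, dotProduct_add, dotProduct_smul,
      dotProduct_smul, dotProduct_smul,
      dotProduct_comm x c₁, dotProduct_comm x c₂, dotProduct_comm x c₃]
    simp [smul_eq_mul]
    ring
  -- Q c₃ = E • c₃
  have hmc3 : Q *ᵥ c₃ = E • c₃ := by
    rw [hmv c₃, ho1', ho2']
    simp
    rfl
  -- pairwise-type independence consequences
  have hcoef : ∀ a b : ℝ, a • c₁ + b • c₂ = 0 → a = 0 ∧ b = 0 := by
    intro a b hab
    have := Fintype.linearIndependent_iff.mp hli ![a, b, 0] ?_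
    · exact ⟨this 0, this 1⟩
    · simp [Fin.sum_univ_three]
      simpa using hab
  -- Cauchy-Schwarz strict
  have hΔ : 0 < A * C - B ^ 2 := by
    have hp : C • c₁ + (-B) • c₂ ≠ 0 := by
      intro h
      exact hC.ne' (hcoef _ _ h).1
    have hpp : 0 < (C • c₁ + (-B) • c₂) ⬝ᵥ (C • c₁ + (-B) • c₂) := aux_dp_pos hp
    have hcomp : (C • c₁ + (-B) • c₂) ⬝ᵥ (C • c₁ + (-B) • c₂) = C * (A * C - B ^ 2) := by
      rw [add_dotProduct, smul_dotProduct, smul_dotProduct,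
        dotProduct_add, dotProduct_add, dotProduct_smul,
        dotProduct_smul, dotProduct_smul, dotProduct_smul,
        ← hAdef, ← hBdef, ← hCdef, hB']
      simp only [smul_eq_mul]
      ring
    nlinarith [hcomp ▸ hpp, hC]
  set Δ := A * C - B ^ 2 with hΔdef
  -- test vectors
  set u₁ : Fin n → ℝ := ((C - B)/Δ) • c₁ + ((A - B)/Δ) • c₂ with hu₁def
  set v : Fin n → ℝ := ((C + B)/Δ) • c₁ + (-(A + B)/Δ) • c₂ with hvdef
  have hdp_u : ∀ w p q : Fin n → ℝ, ∀ s t : ℝ,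
      w ⬝ᵥ (s • p + t • q) = s * (w ⬝ᵥ p) + t * (w ⬝ᵥ q) := by
    intro w p q s t
    rw [dotProduct_add, dotProduct_smul, dotProduct_smul]
    simp [smul_eq_mul]
  have hu11 : c₁ ⬝ᵥ u₁ = 1 := by
    rw [hu₁def, hdp_u c₁ c₁ c₂, ← hAdef, ← hBdef]
    field_simp
    ring
  have hu12 : c₂ ⬝ᵥ u₁ = 1 := by
    rw [hu₁def, hdp_u c₂ c₁ c₂, hB', ← hCdef]
    field_simp
    ring
  have hu13 : c₃ ⬝ᵥ u₁ = 0 := by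
    rw [hu₁def, hdp_u c₃ c₁ c₂, ho1, ho2]
    ring
  have hv1 : c₁ ⬝ᵥ v = 1 := by
    rw [hvdef, hdp_u c₁ c₁ c₂, ← hAdef, ← hBdef]
    field_simp
    ring
  have hv2 : c₂ ⬝ᵥ v = -1 := by
    rw [hvdef, hdp_u c₂ c₁ c₂, hB', ← hCdef]
    field_simp
    ring
  have hv3 : c₃ ⬝ᵥ v = 0 := by
    rw [hvdef, hdp_u c₃ c₁ c₂, ho1, ho2]
    ring
  -- eigenvalue machinery
  set lam := hQsym.eigenvalues with hlam
  set U : Matrix (Fin n) (Fin n) ℝ := (hQsym.eigenvectorUnitary : Matrix (Fin n) (Fin n) ℝ)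
    with hU
  have hspec : ∀ x : Fin n → ℝ, x ⬝ᵥ Q *ᵥ x = ∑ i, lam i * ((star U *ᵥ x) i) ^ 2 :=
    fun x => aux_spectral Q hQsym x
  -- at least one negative eigenvalue
  have hNex : ∃ i, lam i < 0 := by
    by_contra h
    push_neg at h
    have h1 : (0:ℝ) ≤ v ⬝ᵥ Q *ᵥ v := by
      rw [hspec v]
      exact Finset.sum_nonneg fun i _ => mul_nonneg (h i) (sq_nonneg _)
    rw [hq v, hv1, hv2, hv3] at h1
    norm_num at h1
  -- at least two positive eigenvalues
  have hPcard : 2 ≤ (Finset.univ.filter fun i => 0 < lam i).card := by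
    by_contra hcon
    push_neg at hcon
    have hcard1 : (Finset.univ.filter fun i => 0 < lam i).card ≤ 1 := by omega
    set M : Matrix (Fin n) (Fin 2) ℝ := Matrix.of fun i j => ![u₁, c₃] j i with hM
    set g : (Fin 2 → ℝ) →ₗ[ℝ] ({i // 0 < lam i} → ℝ) :=
      (LinearMap.funLeft ℝ ℝ (Subtype.val)) ∘ₗ (star U).mulVecLin ∘ₗ M.mulVecLin with hg
    have hginj : ¬ Function.Injective g := by
      intro hinj
      have hle := LinearMap.finrank_le_finrank_of_injective hinj
      rw [Module.finrank_fin_fun] at hle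
      have : Module.finrank ℝ ({i // 0 < lam i} → ℝ) = Fintype.card {i // 0 < lam i} := by
        simp [Module.finrank_pi]
      rw [this, Fintype.card_subtype] at hle
      omega
    rw [Function.not_injective_iff] at hginj
    obtain ⟨a, b, hab, hne⟩ := hginj
    set w : Fin 2 → ℝ := a - b with hw
    have hgw : g w = 0 := by rw [hw, map_sub, hab, sub_self]
    have hwne : w ≠ 0 := sub_ne_zero.mpr hne
    set x : Fin n → ℝ := w 0 • u₁ + w 1 • c₃ with hx
    have hMx : M *ᵥ w = x := by
      ext i
      simp [hM, hx, mulVec, dotProduct, Fin.sum_univ_two, mul_comm]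
    -- coordinates vanish on positive eigenvalues
    have hy0 : ∀ i : Fin n, 0 < lam i → (star U *ᵥ x) i = 0 := by
      intro i hi
      have := congrFun hgw ⟨i, hi⟩
      simpa [hg, LinearMap.funLeft_apply, Matrix.mulVecLin_apply, hMx] using this
    have hle0 : x ⬝ᵥ Q *ᵥ x ≤ 0 := by
      rw [hspec x]
      refine Finset.sum_nonpos fun i _ => ?_
      by_cases hi : 0 < lam i
      · rw [hy0 i hi]
        simp
      · push_neg at hi
        exact mul_nonpos_of_nonpos_of_nonneg hi (sq_nonneg _)
    have hxq : x ⬝ᵥ Q *ᵥ x = (w 0) ^ 2 + (w 1 * E) ^ 2 := by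
      rw [hq x]
      have e1 : c₁ ⬝ᵥ x = w 0 := by rw [hx, hdp_u c₁ u₁ c₃, hu11, ho1']; ring
      have e2 : c₂ ⬝ᵥ x = w 0 := by rw [hx, hdp_u c₂ u₁ c₃, hu12, ho2']; ring
      have e3 : c₃ ⬝ᵥ x = w 1 * E := by rw [hx, hdp_u c₃ u₁ c₃, hu13, ← hEdef]; ring
      rw [e1, e2, e3]
      ring
    have hw01 : w 0 ≠ 0 ∨ w 1 ≠ 0 := by
      by_contra hco
      push_neg at hco
      apply hwne
      funext j
      match j with
      | ⟨0, _⟩ => exact hco.1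
      | ⟨1, _⟩ => exact hco.2
    have hwpos : 0 < (w 0) ^ 2 + (w 1 * E) ^ 2 := by
      rcases hw01 with hj | hj
      · have h0 : 0 < (w 0) ^ 2 := by positivity
        linarith [sq_nonneg (w 1 * E)]
      · have hne' : w 1 * E ≠ 0 := mul_ne_zero hj hE.ne'
        have h0 : 0 < (w 1 * E) ^ 2 := by positivity
        linarith [sq_nonneg (w 0)]
    rw [hxq] at hle0
    linarith
  -- rank at most 3
  have hrank_le : Q.rank ≤ 3 := by
    have hsub : LinearMap.range Q.mulVecLin ≤ Submodule.span ℝ (Set.range ![c₁, c₂, c₃]) := by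
      rintro y ⟨x, rfl⟩
      rw [Matrix.mulVecLin_apply, hmv x]
      have m1 : c₁ ∈ Set.range ![c₁, c₂, c₃] := ⟨0, rfl⟩
      have m2 : c₂ ∈ Set.range ![c₁, c₂, c₃] := ⟨1, rfl⟩
      have m3 : c₃ ∈ Set.range ![c₁, c₂, c₃] := ⟨2, rfl⟩
      exact Submodule.add_mem _
        (Submodule.add_mem _
          (Submodule.smul_mem _ _ (Submodule.subset_span m1))
          (Submodule.smul_mem _ _ (Submodule.subset_span m2)))
        (Submodule.smul_mem _ _ (Submodule.subset_span m3))
    have hle := Submodule.finrank_mono hsub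
    have hsp : Module.finrank ℝ (Submodule.span ℝ (Set.range ![c₁, c₂, c₃])) = 3 := by
      rw [finrank_span_eq_card hli]
      simp
    have : Q.rank = Module.finrank ℝ (LinearMap.range Q.mulVecLin) := rfl
    rw [this, ← hsp] at *
    exact hle
  -- rank = #pos + #neg
  have hrank_eq : Q.rank = (Finset.univ.filter fun i => 0 < lam i).card
      + (Finset.univ.filter fun i => lam i < 0).card := by
    rw [hQsym.rank_eq_card_non_zero_eigs, Fintype.card_subtype]
    have : (Finset.univ.filter fun i => hQsym.eigenvalues i ≠ 0)
        = (Finset.univ.filter fun i => 0 < lam i) ∪ (Finset.univ.filter fun i => lam i < 0) := by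
      rw [← Finset.filter_or]
      apply Finset.filter_congr
      intro i _
      constructor
      · intro h
        rcases h.lt_or_gt with h' | h'
        · exact Or.inr h'
        · exact Or.inl h'
      · rintro (h' | h') <;> [exact h'.ne'; exact h'.ne]
    rw [this, Finset.card_union_of_disjoint]
    rw [Finset.disjoint_filter]
    intro i _ hi hi'
    exact absurd hi' (not_lt.mpr hi.le)
  have hNcard : 1 ≤ (Finset.univ.filter fun i => lam i < 0).card := by
    obtain ⟨i, hi⟩ := hNex
    exact Finset.card_pos.mpr ⟨i, Finset.mem_filter.mpr ⟨Finset.mem_univ i, hi⟩⟩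
  refine ⟨by omega, by omega, by omega, hE, hmc3⟩
end

section
/- Let m = n(n+1)/2 and let z : ℝⁿ → ℝᵐ map x to the vector of quadratic monomials (x₁², x₁x₂, …, x₁xₙ, x₂², x₂x₃, …, xₙ²). Let E be a real symmetric positive definite n×n matrix, α > 0, A ∈ ℝⁿˣⁿ, B ∈ ℝⁿˣᵐ, and let M₁, …, M_k be real symmetric (n+m)×(n+m) matrices such that for each i and every x ∈ ℝⁿ with xᵀEx ≤ α², the vector v = (x, z(x)) ∈ ℝⁿ⁺ᵐ satisfies vᵀM_i v ≥ 0. Suppose there exist a real symmetric n×n matrix P, scalars ξ₁,…,ξ_k ≥ 0, and ε > 0 such that the symmetric matrix [[AᵀP + PA, PB],[BᵀP, 0]] + Σᵢ ξᵢ Mᵢ − [[−εI, 0],[0, 0]] is negative definite. Then for every nonzero x ∈ ℝⁿ with xᵀEx ≤ α², one has 2 xᵀ P (Ax + B z(x)) < −ε xᵀx. -/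
open Matrix

private lemma sum_mulVec' {k n : Type*} [Fintype k] [Fintype n] (f : k → Matrix n n ℝ)
    (v : n → ℝ) : (∑ i, f i) *ᵥ v = ∑ i, f i *ᵥ v := by
  ext j
  simp [mulVec, dotProduct, Finset.sum_mul, Finset.sum_apply, Matrix.sum_apply]
  rw [Finset.sum_comm]

private lemma dotProduct_sum' {k n : Type*} [Fintype k] [Fintype n] (v : n → ℝ)
    (f : k → n → ℝ) : v ⬝ᵥ (∑ i, f i) = ∑ i, v ⬝ᵥ f i := by
  simp [dotProduct, Finset.mul_sum, Finset.sum_apply]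
  rw [Finset.sum_comm]

/-- The list of quadratic monomials of `x ∈ ℝⁿ` in the order
`x₁², x₁x₂, …, x₁xₙ, x₂², x₂x₃, …, xₙ²`. -/
def quadMonomialList {n : ℕ} (x : Fin n → ℝ) : List ℝ :=
  (List.finRange n).flatMap fun i =>
    ((List.finRange n).filter fun j => decide (i ≤ j)).map fun j => x i * x j

/-- The vector `z(x) ∈ ℝᵐ` of quadratic monomials of `x ∈ ℝⁿ`
(with `m = n(n+1)/2`). -/
def quadMonomialVec {n : ℕ} (m : ℕ) (x : Fin n → ℝ) : Fin m → ℝ :=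
  fun l => (quadMonomialList x).getD l.val 0

/-- Key step in Theorem 1: if the nonlinearity `z` satisfies the quadratic
constraints `M₁, …, M_k` on the ellipsoid `{x : xᵀEx ≤ α²}` and the linear
matrix inequality `[[AᵀP+PA, PB],[BᵀP, 0]] + Σᵢ ξᵢ Mᵢ − [[−εI, 0],[0, 0]] ≺ 0`
holds with `ξᵢ ≥ 0`, then `2 xᵀP(Ax + Bz(x)) < −ε xᵀx` for every nonzero `x`
in the ellipsoid. -/
theorem dissipation_strict_decrease {n m k : ℕ} (hm : m = n * (n + 1) / 2)
    (E : Matrix (Fin n) (Fin n) ℝ) (hE : E.PosDef) (α : ℝ) (hα : 0 < α)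
    (A : Matrix (Fin n) (Fin n) ℝ) (B : Matrix (Fin n) (Fin m) ℝ)
    (M : Fin k → Matrix (Fin n ⊕ Fin m) (Fin n ⊕ Fin m) ℝ)
    (hMsym : ∀ i, (M i).IsHermitian)
    (hQC : ∀ (i : Fin k) (x : Fin n → ℝ), x ⬝ᵥ E.mulVec x ≤ α ^ 2 →
      0 ≤ Sum.elim x (quadMonomialVec m x) ⬝ᵥ
            (M i).mulVec (Sum.elim x (quadMonomialVec m x)))
    (P : Matrix (Fin n) (Fin n) ℝ) (hP : P.IsHermitian)
    (ξ : Fin k → ℝ) (hξ : ∀ i, 0 ≤ ξ i) (ε : ℝ) (hε : 0 < ε)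
    (hLMI : (-(fromBlocks (Aᵀ * P + P * A) (P * B) (Bᵀ * P) 0
            + ∑ i, ξ i • M i
            - fromBlocks (-(ε • (1 : Matrix (Fin n) (Fin n) ℝ))) 0 0 0)).PosDef)
    (x : Fin n → ℝ) (hx0 : x ≠ 0) (hx : x ⬝ᵥ E.mulVec x ≤ α ^ 2) :
    2 * (x ⬝ᵥ P.mulVec (A.mulVec x + B.mulVec (quadMonomialVec m x)))
      < -ε * (x ⬝ᵥ x) := by

  set z := quadMonomialVec m x with hz
  set v : Fin n ⊕ Fin m → ℝ := Sum.elim x z with hvdef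
  have hv0 : v ≠ 0 := by
    intro h
    apply hx0
    funext i
    exact congrFun h (Sum.inl i)
  have hpos := hLMI.dotProduct_mulVec_pos hv0
  simp only [RCLike.star_def, star_trivial] at hpos
  rw [neg_mulVec, dotProduct_neg] at hpos
  rw [sub_mulVec, add_mulVec, dotProduct_sub, dotProduct_add] at hpos
  have ht2 : 0 ≤ v ⬝ᵥ (∑ i, ξ i • M i) *ᵥ v := by
    rw [sum_mulVec', dotProduct_sum']
    apply Finset.sum_nonneg
    intro i _
    rw [smul_mulVec, dotProduct_smul]
    exact mul_nonneg (hξ i) (hQC i x hx)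
  have ht3 : v ⬝ᵥ (fromBlocks (-(ε • (1 : Matrix (Fin n) (Fin n) ℝ))) 0 0 0) *ᵥ v
      = -(ε * (x ⬝ᵥ x)) := by
    rw [hvdef, fromBlocks_mulVec]
    simp [sumElim_dotProduct_sumElim, neg_mulVec, dotProduct_smul, smul_mulVec]
  have hPT : Pᵀ = P := by
    have := hP.eq
    simpa [Matrix.conjTranspose_eq_transpose_of_trivial] using this
  have hvm : x ᵥ* P = P *ᵥ x := by
    conv_lhs => rw [← hPT]
    exact vecMul_transpose P x
  have hPsym : ∀ w : Fin n → ℝ, x ⬝ᵥ P *ᵥ w = w ⬝ᵥ P *ᵥ x := by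
    intro w
    rw [dotProduct_mulVec, hvm, dotProduct_comm]
  have ht1 : v ⬝ᵥ (fromBlocks (Aᵀ * P + P * A) (P * B) (Bᵀ * P) 0) *ᵥ v
      = 2 * (x ⬝ᵥ P.mulVec (A.mulVec x + B.mulVec z)) := by
    rw [hvdef, fromBlocks_mulVec]
    rw [sumElim_dotProduct_sumElim]
    simp only [Sum.elim_comp_inl, Sum.elim_comp_inr, zero_mulVec, add_zero]
    rw [dotProduct_add, add_mulVec, dotProduct_add]
    simp only [← mulVec_mulVec, mulVec_add]
    rw [dotProduct_mulVec x Aᵀ, vecMul_transpose, dotProduct_mulVec z Bᵀ, vecMul_transpose]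
    rw [dotProduct_add, hPsym (A *ᵥ x), hPsym (B *ᵥ z)]
    rw [dotProduct_comm (A *ᵥ x), dotProduct_comm (B *ᵥ z)]
    ring
  rw [ht1, ht3] at hpos
  nlinarith [ht2]
end
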